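/- arXiv:1107.3268 — 6 statements merged into one kernel-verified Lean document; each statement's English description precedes it below -/
import Mathlib

section
/- Define θ(α, i) as: wt_{i,n+1}(α) + i/2 if i even, wt_{i,n+1}(α) + (i-1)/2 + α(n+1) if i odd. For any α, β ∈ F_2^{n+1} with α ⊕ β = e ⊕ e_i ⊕ e_j (1 ≤ i < j ≤ n), it holds that θ(α,i) + θ(β,i) + θ(α,j) + θ(β,j) ≡ 1 (mod 2). -/
open Finset

/-- The `i`-th standard basis vector of `F_2^{n+1}`. -/
def unitV (n : ℕ) (i : Fin (n+1)) : Fin (n+1) → ZMod 2 :=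
  fun j => if j = i then 1 else 0

/-- The all-ones vector of `F_2^{n+1}`. -/
def onesV (n : ℕ) : Fin (n+1) → ZMod 2 := fun _ => 1

/-- `φ(α, i) = α ⊕ α(n+1)·e ⊕ e_i`. -/
def phiV (n : ℕ) (α : Fin (n+1) → ZMod 2) (i : Fin (n+1)) :
    Fin (n+1) → ZMod 2 :=
  α + α (Fin.last n) • onesV n + unitV n i

/-- `wt_{s,t}(α)`, the number of ones among coordinates `s,…,t`. -/
def wtIcc (n : ℕ) (α : Fin (n+1) → ZMod 2) (s t : Fin (n+1)) : ℕ :=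
  ∑ l ∈ Finset.Icc s t, (α l).val

/-- Hamming weight. -/
def wtV (n : ℕ) (α : Fin (n+1) → ZMod 2) : ℕ := ∑ l, (α l).val

/-- `θ(α,i)`: with the 1-based position of index `i : Fin (n+1)` being `i.1 + 1`,
`θ(α,i) = wt_{i,n+1}(α) + i/2` for even `i`, and
`θ(α,i) = wt_{i,n+1}(α) + (i-1)/2 + α(n+1)` for odd `i`. -/
def thetaV (n : ℕ) (α : Fin (n+1) → ZMod 2) (i : Fin (n+1)) : ℤ :=
  if (i.1 + 1) % 2 = 0 then
    (wtIcc n α i (Fin.last n) : ℤ) + ((i.1 + 1) / 2 : ℕ)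
  else
    (wtIcc n α i (Fin.last n) : ℤ) + ((i.1 : ℕ) / 2 : ℕ) + ((α (Fin.last n)).val : ℕ)

/-- if `α ⊕ β = e ⊕ e_i ⊕ e_j` with `1 ≤ i < j ≤ n`, then
`θ(α,i) + θ(β,i) + θ(α,j) + θ(β,j) ≡ 1 (mod 2)`. -/
theorem stmt4 (n : ℕ) (i j : Fin (n+1)) (hij : i < j) (hj : j ≠ Fin.last n)
    (α β : Fin (n+1) → ZMod 2)
    (h : α + β = onesV n + unitV n i + unitV n j) :
    thetaV n α i + thetaV n β i + thetaV n α j + thetaV n β j ≡ 1 [ZMOD 2] := by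
  have hne : i ≠ j := hij.ne
  have hjlt : j < Fin.last n := lt_of_le_of_ne (Fin.le_last j) hj
  have hilt : i < Fin.last n := hij.trans hjlt
  -- pointwise description of α + β
  have hpt : ∀ l, (α l + β l).val
      + ((if l = i then 1 else 0) + (if l = j then 1 else 0)) = 1 := by
    intro l
    have hl := congrFun h l
    simp only [Pi.add_apply, onesV, unitV] at hl
    by_cases h1 : l = i <;> by_cases h2 : l = j <;>
      simp only [h1, h2, if_pos, if_neg, hne, hne.symm, if_true, if_false] at hl ⊢ <;>
      first
        | exact absurd (h1 ▸ h2 : i = j) hne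
        | (rw [hl]; decide)
  -- summed version
  have hsum : ∀ S : Finset (Fin (n+1)),
      (∑ l ∈ S, (α l + β l).val)
        + ((if i ∈ S then 1 else 0) + (if j ∈ S then 1 else 0)) = S.card := by
    intro S
    have h1 : ∑ l ∈ S, ((α l + β l).val
        + ((if l = i then 1 else 0) + (if l = j then 1 else 0))) = ∑ _l ∈ S, 1 :=
      Finset.sum_congr rfl fun l _ => hpt l
    rw [Finset.sum_add_distrib, Finset.sum_add_distrib,
      Finset.sum_ite_eq' S i (fun _ => 1), Finset.sum_ite_eq' S j (fun _ => 1),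
      Finset.sum_const, smul_eq_mul, mul_one] at h1
    exact h1
  -- parity link for weights
  have hw : ∀ s : Fin (n+1),
      (wtIcc n α s (Fin.last n) + wtIcc n β s (Fin.last n)) % 2
        = (∑ l ∈ Finset.Icc s (Fin.last n), (α l + β l).val) % 2 := by
    intro s
    unfold wtIcc
    rw [← Finset.sum_add_distrib, Finset.sum_nat_mod, Finset.sum_nat_mod _ 2
      (fun l => (α l + β l).val)]
    congr 1
    refine Finset.sum_congr rfl fun l _ => ?_
    rw [ZMod.val_add]
    omega
  have hii : i ∈ Finset.Icc i (Fin.last n) := Finset.mem_Icc.2 ⟨le_refl _, Fin.le_last _⟩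
  have hji : j ∈ Finset.Icc i (Fin.last n) := Finset.mem_Icc.2 ⟨hij.le, Fin.le_last _⟩
  have hjj : j ∈ Finset.Icc j (Fin.last n) := Finset.mem_Icc.2 ⟨le_refl _, Fin.le_last _⟩
  have hij' : i ∉ Finset.Icc j (Fin.last n) := by
    simp only [Finset.mem_Icc, not_and]
    intro hle
    exact absurd hle (not_le.2 hij)
  have hci : (Finset.Icc i (Fin.last n)).card = n + 1 - i.1 := by
    rw [Fin.card_Icc]; simp [Fin.last]
  have hcj : (Finset.Icc j (Fin.last n)).card = n + 1 - j.1 := by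
    rw [Fin.card_Icc]; simp [Fin.last]
  have hSi := hsum (Finset.Icc i (Fin.last n))
  have hSj := hsum (Finset.Icc j (Fin.last n))
  rw [if_pos hii, if_pos hji, hci] at hSi
  rw [if_neg hij', if_pos hjj, hcj] at hSj
  have hwi := hw i
  have hwj := hw j
  -- value at last coordinate
  have hlast : ((α (Fin.last n)).val + (β (Fin.last n)).val) % 2 = 1 := by
    have := hpt (Fin.last n)
    rw [if_neg (Fin.ne_of_gt hilt), if_neg (Fin.ne_of_gt hjlt)] at this
    rw [← ZMod.val_add]
    omega
  have hi_le : i.1 ≤ n := Fin.is_le i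
  have hj_le : j.1 ≤ n := Fin.is_le j
  have hijlt : i.1 < j.1 := hij
  have hva : (α (Fin.last n)).val < 2 := ZMod.val_lt _
  have hvb : (β (Fin.last n)).val < 2 := ZMod.val_lt _
  unfold thetaV
  show _ % (2:ℤ) = 1 % 2
  split_ifs with h1 h2 h2 <;> push_cast <;> omega
end

section
/- Let n ≥ 1 and define the 2^{n+1} × n matrix G_n over the polynomial-like ring of complex variables z_γ (γ ∈ F_2^{n+1} with last bit 0, identified with F_2^n) and their conjugates, by: G_n(α, i) = 0 if α(i) = 0; G_n(α, i) = (-1)^{θ(α,i)} z_{φ(α,i)} if α(i) = 1 and α(n+1) = 0; G_n(α, i) = (-1)^{θ(α,i)} z*_{φ(α,i)} if α(i) = 1 and α(n+1) = 1. Then for any two distinct columns i ≠ j, Σ_{α ∈ F_2^{n+1}} G_n(α, i)* · G_n(α, j) = 0, i.e., the columns of G_n are pairwise orthogonal. -/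
open Finset

/-- The entry of the matrix `G_n` on row `α` and column `i`, as a formal complex
function of an assignment `z` of the variables. -/
noncomputable def Gmat (n : ℕ) (z : (Fin (n+1) → ZMod 2) → ℂ)
    (α : Fin (n+1) → ZMod 2) (i : Fin (n+1)) : ℂ :=
  if α i = 0 then 0
  else if α (Fin.last n) = 0 then
    (-1 : ℂ) ^ thetaV n α i * z (phiV n α i)
  else
    (-1 : ℂ) ^ thetaV n α i * (starRingEnd ℂ) (z (phiV n α i))

/-! ### Auxiliary material -/

/-- The pairing vector `e ⊕ e_i ⊕ e_j`. -/
def dvec (n : ℕ) (i j : Fin (n+1)) : Fin (n+1) → ZMod 2 :=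
  onesV n + unitV n i + unitV n j

lemma dvec_last (n : ℕ) (i j : Fin (n+1)) (hi : i ≠ Fin.last n) (hj : j ≠ Fin.last n) :
    dvec n i j (Fin.last n) = 1 := by
  simp [dvec, onesV, unitV, Pi.add_apply, if_neg (Ne.symm hi), if_neg (Ne.symm hj)]

lemma dvec_apply_i (n : ℕ) (i j : Fin (n+1)) (hij : i ≠ j) : dvec n i j i = 0 := by
  simp [dvec, onesV, unitV, Pi.add_apply, if_neg hij]
  decide

lemma dvec_apply_j (n : ℕ) (i j : Fin (n+1)) (hij : i ≠ j) : dvec n i j j = 0 := by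
  simp [dvec, onesV, unitV, Pi.add_apply, if_neg (Ne.symm hij)]
  decide

lemma wtIcc_add_mod (n : ℕ) (α β : Fin (n+1) → ZMod 2) (s t : Fin (n+1)) :
    wtIcc n (α + β) s t % 2 = (wtIcc n α s t + wtIcc n β s t) % 2 := by
  unfold wtIcc
  rw [Finset.sum_nat_mod, ← Finset.sum_add_distrib,
    Finset.sum_nat_mod (Finset.Icc s t) 2 (fun l => (α l).val + (β l).val)]
  congr 1
  refine Finset.sum_congr rfl fun l _ => ?_
  rw [Pi.add_apply, ZMod.val_add, Nat.mod_mod_of_dvd _ (dvd_refl 2)]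

lemma wtIcc_ones (n : ℕ) (s : Fin (n+1)) :
    wtIcc n (onesV n) s (Fin.last n) = n + 1 - s.1 := by
  unfold wtIcc onesV
  simp [ZMod.val_one, Fin.card_Icc]

lemma wtIcc_unit (n : ℕ) (s k : Fin (n+1)) :
    wtIcc n (unitV n k) s (Fin.last n) = if s ≤ k then 1 else 0 := by
  unfold wtIcc unitV
  have h : ∀ l : Fin (n+1), ((if l = k then (1 : ZMod 2) else 0)).val
      = if l = k then 1 else 0 := by
    intro l; split <;> simp [ZMod.val_one]
  simp_rw [h]
  rw [Finset.sum_ite_eq' (Finset.Icc s (Fin.last n)) k (fun _ => 1)]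
  simp [Finset.mem_Icc, Fin.le_last]

lemma add_dvec_last (n : ℕ) (α : Fin (n+1) → ZMod 2) (i j : Fin (n+1))
    (hi : i ≠ Fin.last n) (hj : j ≠ Fin.last n) :
    (α + dvec n i j) (Fin.last n) = α (Fin.last n) + 1 := by
  rw [Pi.add_apply, dvec_last n i j hi hj]

lemma theta_key (n : ℕ) (α : Fin (n+1) → ZMod 2) (i j : Fin (n+1))
    (hi : i ≠ Fin.last n) (hj : j ≠ Fin.last n) (hij : i ≠ j) :
    Odd (thetaV n (α + dvec n i j) i + thetaV n (α + dvec n i j) j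
      + thetaV n α i + thetaV n α j) := by
  have hvals : ((α + dvec n i j) (Fin.last n)).val + (α (Fin.last n)).val = 1 := by
    rw [add_dvec_last n α i j hi hj]
    generalize α (Fin.last n) = a
    revert a; decide
  have hd : ∀ s : Fin (n+1), wtIcc n (dvec n i j) s (Fin.last n) % 2
      = ((n + 1 - s.1) + (if s ≤ i then 1 else 0) + (if s ≤ j then 1 else 0)) % 2 := by
    intro s
    have h1 := wtIcc_add_mod n (onesV n + unitV n i) (unitV n j) s (Fin.last n)
    have h2 := wtIcc_add_mod n (onesV n) (unitV n i) s (Fin.last n)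
    rw [wtIcc_ones, wtIcc_unit] at h2
    rw [wtIcc_unit] at h1
    show wtIcc n ((onesV n + unitV n i) + unitV n j) s (Fin.last n) % 2 = _
    omega
  have hβi := wtIcc_add_mod n α (dvec n i j) i (Fin.last n)
  have hβj := wtIcc_add_mod n α (dvec n i j) j (Fin.last n)
  have hdi := hd i
  have hdj := hd j
  rw [if_pos le_rfl] at hdi
  rw [if_pos le_rfl] at hdj
  have hile : i.1 ≤ n := Fin.is_le i
  have hjle : j.1 ≤ n := Fin.is_le j
  have hne : i.1 ≠ j.1 := fun h => hij (Fin.ext h)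
  rcases le_or_gt i j with hle | hlt
  · rw [if_pos hle] at hdi
    rw [if_neg (by exact fun h => hij (le_antisymm hle h))] at hdj
    have hle' : i.1 ≤ j.1 := hle
    unfold thetaV
    rw [add_dvec_last n α i j hi hj] at *
    split_ifs with h1 h2 h2 <;> rw [Int.odd_iff] <;> push_cast <;> omega
  · rw [if_neg (not_le_of_gt hlt)] at hdi
    rw [if_pos (le_of_lt hlt)] at hdj
    have hlt' : j.1 ≤ i.1 := le_of_lt hlt
    unfold thetaV
    rw [add_dvec_last n α i j hi hj] at *
    split_ifs with h1 h2 h2 <;> rw [Int.odd_iff] <;> push_cast <;> omega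

lemma neg_one_zpow_key {A B C D : ℤ} (h : Odd (A + B + C + D)) :
    (-1 : ℂ) ^ A * (-1 : ℂ) ^ B = -((-1 : ℂ) ^ C * (-1 : ℂ) ^ D) := by
  have hne : (-1 : ℂ) ≠ 0 := by norm_num
  have e1 : (-1 : ℂ) ^ (A + B) * (-1 : ℂ) ^ (C + D) = -1 := by
    rw [← zpow_add₀ hne]
    exact Odd.neg_one_zpow (by rwa [show A + B + (C + D) = A + B + C + D by ring])
  have e2 : (-1 : ℂ) ^ (C + D) * (-1 : ℂ) ^ (C + D) = 1 := by
    rw [← zpow_add₀ hne]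
    exact Even.neg_one_zpow ⟨C + D, rfl⟩
  have e3 : (-1 : ℂ) ^ (A + B) = -((-1 : ℂ) ^ (C + D)) := by
    calc (-1 : ℂ) ^ (A + B)
        = (-1 : ℂ) ^ (A + B) * ((-1 : ℂ) ^ (C + D) * (-1 : ℂ) ^ (C + D)) := by
          rw [e2, mul_one]
      _ = ((-1 : ℂ) ^ (A + B) * (-1 : ℂ) ^ (C + D)) * (-1 : ℂ) ^ (C + D) := by ring
      _ = -((-1 : ℂ) ^ (C + D)) := by rw [e1]; ring
  rw [← zpow_add₀ hne, ← zpow_add₀ hne]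
  exact e3

lemma phi_swap₁ (n : ℕ) (α : Fin (n+1) → ZMod 2) (i j : Fin (n+1))
    (hi : i ≠ Fin.last n) (hj : j ≠ Fin.last n) :
    phiV n (α + dvec n i j) i = phiV n α j := by
  funext l
  simp only [phiV, dvec, Pi.add_apply, Pi.smul_apply, onesV, unitV, smul_eq_mul, mul_one,
    if_neg (Ne.symm hi), if_neg (Ne.symm hj)]
  generalize α l = a
  generalize α (Fin.last n) = b
  split_ifs <;> (revert a b; decide)

lemma phi_swap₂ (n : ℕ) (α : Fin (n+1) → ZMod 2) (i j : Fin (n+1))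
    (hi : i ≠ Fin.last n) (hj : j ≠ Fin.last n) :
    phiV n (α + dvec n i j) j = phiV n α i := by
  funext l
  simp only [phiV, dvec, Pi.add_apply, Pi.smul_apply, onesV, unitV, smul_eq_mul, mul_one,
    if_neg (Ne.symm hi), if_neg (Ne.symm hj)]
  generalize α l = a
  generalize α (Fin.last n) = b
  split_ifs <;> (revert a b; decide)

/-- any two distinct columns of `G_n` are orthogonal. -/
theorem stmt5 (n : ℕ) (hn : 1 ≤ n) (i j : Fin (n+1))
    (hi : i ≠ Fin.last n) (hj : j ≠ Fin.last n) (hij : i ≠ j)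
    (z : (Fin (n+1) → ZMod 2) → ℂ) :
    ∑ α : Fin (n+1) → ZMod 2,
      (starRingEnd ℂ) (Gmat n z α i) * Gmat n z α j = 0 := by
  classical
  refine Finset.sum_ninvolution (fun α => α + dvec n i j) ?_ ?_ (fun _ => mem_univ _) ?_
  · intro α
    by_cases hαi : α i = 0
    · have hβi : (α + dvec n i j) i = 0 := by
        rw [Pi.add_apply, hαi, dvec_apply_i n i j hij, add_zero]
      simp [Gmat, hαi, hβi]
    by_cases hαj : α j = 0
    · have hβj : (α + dvec n i j) j = 0 := by
        rw [Pi.add_apply, hαj, dvec_apply_j n i j hij, add_zero]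
      simp [Gmat, hαj, hβj]
    · have hβi : (α + dvec n i j) i = α i := by
        rw [Pi.add_apply, dvec_apply_i n i j hij, add_zero]
      have hβj : (α + dvec n i j) j = α j := by
        rw [Pi.add_apply, dvec_apply_j n i j hij, add_zero]
      have hβi' : (α + dvec n i j) i ≠ 0 := by rw [hβi]; exact hαi
      have hβj' : (α + dvec n i j) j ≠ 0 := by rw [hβj]; exact hαj
      have hβlast := add_dvec_last n α i j hi hj
      have hφ1 := phi_swap₁ n α i j hi hj
      have hφ2 := phi_swap₂ n α i j hi hj
      have hodd := theta_key n α i j hi hj hij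
      have hkey : (-1 : ℂ) ^ thetaV n (α + dvec n i j) i
            * (-1 : ℂ) ^ thetaV n (α + dvec n i j) j
          = -((-1 : ℂ) ^ thetaV n α i * (-1 : ℂ) ^ thetaV n α j) :=
        neg_one_zpow_key hodd
      have h01 : ∀ a : ZMod 2, a = 0 ∨ a = 1 := by decide
      rcases h01 (α (Fin.last n)) with hl | hl
      · have hβl : (α + dvec n i j) (Fin.last n) ≠ 0 := by
          rw [hβlast, hl]; decide
        simp only [Gmat, if_neg hαi, if_neg hαj, if_neg hβi', if_neg hβj',
          if_pos hl, if_neg hβl, hφ1, hφ2, map_mul, map_zpow₀, map_neg, map_one,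
          Complex.conj_conj]
        linear_combination ((starRingEnd ℂ) (z (phiV n α i)) * z (phiV n α j)) * hkey
      · have hl' : α (Fin.last n) ≠ 0 := by rw [hl]; decide
        have hβl : (α + dvec n i j) (Fin.last n) = 0 := by
          rw [hβlast, hl]; decide
        simp only [Gmat, if_neg hαi, if_neg hαj, if_neg hβi', if_neg hβj',
          if_neg hl', if_pos hβl, hφ1, hφ2, map_mul, map_zpow₀, map_neg, map_one,
          Complex.conj_conj]
        linear_combination (z (phiV n α i) * (starRingEnd ℂ) (z (phiV n α j))) * hkey
  · intro α _ heq
    have heq' : α + dvec n i j = α := heq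
    have h := add_dvec_last n α i j hi hj
    rw [heq'] at h
    simp at h
  · intro α
    show α + dvec n i j + dvec n i j = α
    have hdd : dvec n i j + dvec n i j = 0 := by
      funext l
      show dvec n i j l + dvec n i j l = 0
      exact CharTwo.add_self_eq_zero _
    rw [add_assoc, hdd, add_zero]
end

section
/- Let n = 2m with m even, and let H_n be the 2^n × n matrix whose first n-1 columns are those of G_{n-1} (indexed by α ∈ F_2^n) and whose last column is L_n(α) = α(n)·(-1)^{ψ(α)} z_{α ⊕ e_n}, where ψ(α) = Σ_{i=1}^{m} α(2i). Then the last column of H_n is orthogonal to each of the first n-1 columns: for each 1 ≤ i ≤ n-1, Σ_α H_n(α, i)* · L_n(α) = 0. -/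
open Finset

/-- `ψ(α) = Σ_{k=1}^{m} α(2k)`, the number of ones of `α` in even (1-based) positions. -/
def psiV (n : ℕ) (α : Fin (n+1) → ZMod 2) : ℕ :=
  ∑ l ∈ Finset.univ.filter (fun l : Fin (n+1) => (l.1 + 1) % 2 = 0), (α l).val

/-- The padded last column `L_n(α) = α(n)·(-1)^{ψ(α)} z_{α ⊕ e_n}`. -/
noncomputable def Lcol (n : ℕ) (z : (Fin (n+1) → ZMod 2) → ℂ)
    (α : Fin (n+1) → ZMod 2) : ℂ :=
  if α (Fin.last n) = 1 then
    (-1 : ℂ) ^ psiV n α * z (α + unitV n (Fin.last n))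
  else 0

lemma zmod2_val_cast (a : ZMod 2) : ((a.val : ZMod 2)) = a := by revert a; decide

lemma even_cast_zmod2 {m : ℕ} (hm : Even m) : (m : ZMod 2) = 0 := by
  obtain ⟨r, rfl⟩ := hm; push_cast
  have h2 : (2 : ZMod 2) = 0 := rfl
  linear_combination (r : ZMod 2) * h2

lemma oddRange (m : ℕ) :
    ∑ k ∈ Finset.range (2*m), (if (k+1) % 2 = 0 then (1:ZMod 2) else 0) = (m : ZMod 2) := by
  induction m with
  | zero => simp
  | succ m ih =>
    rw [show 2*(m+1) = 2*m+1+1 by ring, Finset.sum_range_succ, Finset.sum_range_succ, ih]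
    have h1 : (2*m+1+1) % 2 = 0 := by omega
    have h2 : (2*m+1) % 2 = 1 := by omega
    rw [h1, h2]
    push_cast; norm_num

lemma odd_of_cast (N : ℤ) (h : ((N : ZMod 2)) = 1) : Odd N := by
  rcases Int.even_or_odd N with he | ho
  · exfalso
    obtain ⟨r, rfl⟩ := he
    push_cast at h
    have h0 : ((r : ZMod 2) + (r : ZMod 2)) = 0 := by
      have h2 : (2 : ZMod 2) = 0 := rfl
      linear_combination (r : ZMod 2) * h2
    rw [h0] at h
    exact absurd h (by decide)
  · exact ho

lemma neg_one_zpow_sum (a b : ℤ) (h : Odd (a+b)) : (-1:ℂ)^a = -(-1:ℂ)^b := by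
  have hne : (-1:ℂ) ≠ 0 := by norm_num
  have this1 : (-1:ℂ)^a * (-1:ℂ)^b = -1 := by
    rw [← zpow_add₀ hne]; exact Odd.neg_one_zpow h
  have h2 : (-1:ℂ)^b * (-1:ℂ)^b = 1 := by
    rw [← zpow_add₀ hne, show b + b = 2*b by ring, zpow_mul]
    norm_num
  linear_combination ((-1:ℂ)^b) * this1 - ((-1:ℂ)^a) * h2

lemma parityLemma (m n : ℕ) (hm : Even m) (hn : n + 1 = 2*m)
    (i : Fin (n+1)) (hi : i ≠ Fin.last n) (α : Fin (n+1) → ZMod 2)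
    (hlast : α (Fin.last n) = 1) :
    Odd (thetaV n α i + (psiV n α : ℤ) +
      (thetaV n (α + onesV n + unitV n i + unitV n (Fin.last n)) i
        + (psiV n (α + onesV n + unitV n i + unitV n (Fin.last n)) : ℤ))) := by
  set β := α + onesV n + unitV n i + unitV n (Fin.last n) with hβ
  have hβlast : β (Fin.last n) = α (Fin.last n) := by
    have key : ∀ a : ZMod 2, a + 1 + 0 + 1 = a := by decide
    simp only [hβ, Pi.add_apply, onesV, unitV, if_neg (Ne.symm hi), if_pos rfl]
    exact key _
  apply odd_of_cast
  -- difference θ - wt is the same for α and β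
  have hdiff : thetaV n α i - (wtIcc n α i (Fin.last n) : ℤ)
      = thetaV n β i - (wtIcc n β i (Fin.last n) : ℤ) := by
    unfold thetaV
    split_ifs with hpar
    · ring
    · rw [hβlast]; ring
  have hN : thetaV n α i + (psiV n α : ℤ) + (thetaV n β i + (psiV n β : ℤ))
      = (wtIcc n α i (Fin.last n) : ℤ) + (wtIcc n β i (Fin.last n) : ℤ)
        + (psiV n α : ℤ) + (psiV n β : ℤ)
        + 2 * (thetaV n α i - (wtIcc n α i (Fin.last n) : ℤ)) := by
    linear_combination -hdiff
  rw [hN]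
  push_cast
  have h2 : (2 : ZMod 2) = 0 := rfl
  -- cast of wt sums
  have castWt : ∀ γ : Fin (n+1) → ZMod 2,
      ((wtIcc n γ i (Fin.last n) : ℕ) : ZMod 2) = ∑ l ∈ Finset.Icc i (Fin.last n), γ l := by
    intro γ; unfold wtIcc; push_cast
    exact Finset.sum_congr rfl (fun l _ => zmod2_val_cast _)
  have castPsi : ∀ γ : Fin (n+1) → ZMod 2,
      ((psiV n γ : ℕ) : ZMod 2)
        = ∑ l ∈ Finset.univ.filter (fun l : Fin (n+1) => (l.1 + 1) % 2 = 0), γ l := by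
    intro γ; unfold psiV; push_cast
    exact Finset.sum_congr rfl (fun l _ => zmod2_val_cast _)
  rw [castWt, castWt, castPsi, castPsi]
  -- pointwise sum
  have hpt : ∀ l, α l + β l = 1 + unitV n i l + unitV n (Fin.last n) l := by
    intro l
    have key : ∀ a b c : ZMod 2, a + (a + 1 + b + c) = 1 + b + c := by decide
    simp only [hβ, Pi.add_apply, onesV]
    exact key _ _ _
  -- sums of indicators
  have hW : (∑ l ∈ Finset.Icc i (Fin.last n), α l) + (∑ l ∈ Finset.Icc i (Fin.last n), β l)
      = (i.1 : ZMod 2) := by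
    rw [← Finset.sum_add_distrib, Finset.sum_congr rfl (fun l _ => hpt l)]
    rw [Finset.sum_add_distrib, Finset.sum_add_distrib]
    have c1 : (∑ l ∈ Finset.Icc i (Fin.last n), (1 : ZMod 2)) = ((n + 1 - i.1 : ℕ) : ZMod 2) := by
      rw [Finset.sum_const, Fin.card_Icc]
      simp [Fin.val_last]
    have c2 : (∑ l ∈ Finset.Icc i (Fin.last n), unitV n i l) = 1 := by
      unfold unitV
      rw [Finset.sum_ite_eq' (Finset.Icc i (Fin.last n)) i (fun _ => (1:ZMod 2))]
      rw [if_pos (Finset.mem_Icc.2 ⟨le_refl _, Fin.le_last _⟩)]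
    have c3 : (∑ l ∈ Finset.Icc i (Fin.last n), unitV n (Fin.last n) l) = 1 := by
      unfold unitV
      rw [Finset.sum_ite_eq' (Finset.Icc i (Fin.last n)) (Fin.last n) (fun _ => (1:ZMod 2))]
      rw [if_pos (Finset.mem_Icc.2 ⟨Fin.le_last _, le_refl _⟩)]
    rw [c1, c2, c3]
    have hle : i.1 ≤ n + 1 := le_of_lt (lt_of_lt_of_le i.isLt (le_refl _))
    have hz : ((n + 1 : ℕ) : ZMod 2) = 0 := by
      rw [hn]; exact even_cast_zmod2 (even_two_mul m)
    rw [Nat.cast_sub hle, hz]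
    have : ∀ x : ZMod 2, 0 - x + 1 + 1 = x := by decide
    exact this _
  have hlastmem : (Fin.last n) ∈ Finset.univ.filter (fun l : Fin (n+1) => (l.1 + 1) % 2 = 0) := by
    refine Finset.mem_filter.2 ⟨Finset.mem_univ _, ?_⟩
    simp only [Fin.val_last]
    omega
  have hP : (∑ l ∈ Finset.univ.filter (fun l : Fin (n+1) => (l.1 + 1) % 2 = 0), α l)
      + (∑ l ∈ Finset.univ.filter (fun l : Fin (n+1) => (l.1 + 1) % 2 = 0), β l)
      = (if (i.1 + 1) % 2 = 0 then (1 : ZMod 2) else 0) + 1 := by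
    rw [← Finset.sum_add_distrib, Finset.sum_congr rfl (fun l _ => hpt l)]
    rw [Finset.sum_add_distrib, Finset.sum_add_distrib]
    have c1 : (∑ l ∈ Finset.univ.filter (fun l : Fin (n+1) => (l.1 + 1) % 2 = 0), (1 : ZMod 2))
        = 0 := by
      rw [Finset.sum_filter]
      rw [Fin.sum_univ_eq_sum_range (fun k => if (k+1) % 2 = 0 then (1:ZMod 2) else 0)]
      rw [hn, oddRange, even_cast_zmod2 hm]
    have c2 : (∑ l ∈ Finset.univ.filter (fun l : Fin (n+1) => (l.1 + 1) % 2 = 0), unitV n i l)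
        = (if (i.1 + 1) % 2 = 0 then (1 : ZMod 2) else 0) := by
      unfold unitV
      rw [Finset.sum_ite_eq' _ i (fun _ => (1:ZMod 2))]
      simp [Finset.mem_filter]
    have c3 : (∑ l ∈ Finset.univ.filter (fun l : Fin (n+1) => (l.1 + 1) % 2 = 0),
        unitV n (Fin.last n) l) = 1 := by
      unfold unitV
      rw [Finset.sum_ite_eq' _ (Fin.last n) (fun _ => (1:ZMod 2)), if_pos hlastmem]
    rw [c1, c2, c3]
    have : ∀ x : ZMod 2, 0 + x + 1 = x + 1 := by decide
    exact this _
  -- conclude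
  rcases Nat.even_or_odd i.1 with hev | hod
  · have hic : (i.1 : ZMod 2) = 0 := even_cast_zmod2 hev
    have hif : (i.1 + 1) % 2 ≠ 0 := by
      rw [Nat.even_iff] at hev; omega
    rw [if_neg hif] at hP
    linear_combination hW + hP + hic +
      (((thetaV n α i : ℤ) : ZMod 2) - ∑ l ∈ Finset.Icc i (Fin.last n), α l) * h2
  · have hic : (i.1 : ZMod 2) = 1 := by
      obtain ⟨r, hr⟩ := hod
      rw [hr]; push_cast
      linear_combination (r : ZMod 2) * h2
    have hif : (i.1 + 1) % 2 = 0 := by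
      rw [Nat.odd_iff] at hod; omega
    rw [if_pos hif] at hP
    linear_combination hW + hP + hic +
      (((thetaV n α i : ℤ) : ZMod 2) - (∑ l ∈ Finset.Icc i (Fin.last n), α l) + 1) * h2

/-- for `n = 2m` with `m` even, the padded column `L_n` is orthogonal
to every column of `G_{n-1}`. -/
theorem stmt10 (m n : ℕ) (hm : Even m) (hn : n + 1 = 2 * m)
    (i : Fin (n+1)) (hi : i ≠ Fin.last n)
    (z : (Fin (n+1) → ZMod 2) → ℂ) :
    ∑ α : Fin (n+1) → ZMod 2,
      (starRingEnd ℂ) (Gmat n z α i) * Lcol n z α = 0 := by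
  classical
  have hn4 : 4 ≤ n + 1 := by
    obtain ⟨r, hr⟩ := hm; omega
  set g : (Fin (n+1) → ZMod 2) → (Fin (n+1) → ZMod 2) :=
    fun α => α + onesV n + unitV n i + unitV n (Fin.last n) with hgdef
  have hgi : ∀ α, g α i = α i := by
    intro α
    have key : ∀ a : ZMod 2, a + 1 + 1 + 0 = a := by decide
    simp only [hgdef, Pi.add_apply, onesV, unitV, if_pos rfl, if_neg hi]
    exact key _
  have hglast : ∀ α, g α (Fin.last n) = α (Fin.last n) := by
    intro α
    have key : ∀ a : ZMod 2, a + 1 + 0 + 1 = a := by decide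
    simp only [hgdef, Pi.add_apply, onesV, unitV, if_neg (Ne.symm hi), if_pos rfl]
    exact key _
  have hginv : ∀ α, g (g α) = α := by
    intro α; funext l
    have key : ∀ a b c d : ZMod 2, a + b + c + d + b + c + d = a := by decide
    simp only [hgdef, Pi.add_apply, onesV]
    exact key _ _ _ _
  apply Finset.sum_ninvolution g
  · -- main cancellation
    intro α
    by_cases hL : α (Fin.last n) = 1
    · by_cases hI : α i = 1
      · -- nontrivial case
        have hne : (-1 : ℂ) ≠ 0 := by norm_num
        have hnI : α i ≠ 0 := by rw [hI]; decide
        have hnL : α (Fin.last n) ≠ 0 := by rw [hL]; decide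
        have hgI : g α i ≠ 0 := by rw [hgi]; exact hnI
        have hgL1 : g α (Fin.last n) = 1 := by rw [hglast]; exact hL
        have hgLne : g α (Fin.last n) ≠ 0 := by rw [hgL1]; decide
        -- index identities
        have idx1 : phiV n α i = g α + unitV n (Fin.last n) := by
          funext l
          have key : ∀ a b c : ZMod 2, a + 1 * 1 + b = a + 1 + b + c + c := by decide
          simp only [phiV, hgdef, Pi.add_apply, Pi.smul_apply, onesV, smul_eq_mul, hL]
          exact key _ _ _
        have idx2 : phiV n (g α) i = α + unitV n (Fin.last n) := by
          funext l
          have u1 : unitV n i (Fin.last n) = 0 := by simp [unitV, Ne.symm hi]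
          have u2 : unitV n (Fin.last n) (Fin.last n) = 1 := by simp [unitV]
          have key : ∀ a b c : ZMod 2,
              a + 1 + b + c + (1 + 1 + 0 + 1) * 1 + b = a + c := by decide
          simp only [phiV, hgdef, Pi.add_apply, Pi.smul_apply, onesV, smul_eq_mul, hL, u1, u2]
          exact key _ _ _
        -- unfold entries
        rw [Gmat, if_neg hnI, if_neg hnL, Gmat, if_neg hgI, if_neg hgLne,
          Lcol, if_pos hL, Lcol, if_pos hgL1]
        simp only [map_mul, map_zpow₀, map_neg, map_one]
        rw [Complex.conj_conj, Complex.conj_conj]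
        rw [idx1, idx2]
        -- sign bookkeeping
        have hodd := parityLemma m n hm hn i hi α hL
        have hsign : (-1 : ℂ) ^ (thetaV n α i + (psiV n α : ℤ))
            = -(-1 : ℂ) ^ (thetaV n (g α) i + (psiV n (g α) : ℤ)) := by
          exact neg_one_zpow_sum _ _ hodd
        have e1 : (-1 : ℂ) ^ thetaV n α i * (-1 : ℂ) ^ (psiV n α)
            = (-1 : ℂ) ^ (thetaV n α i + (psiV n α : ℤ)) := by
          rw [zpow_add₀ hne, zpow_natCast]
        have e2 : (-1 : ℂ) ^ thetaV n (g α) i * (-1 : ℂ) ^ (psiV n (g α))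
            = (-1 : ℂ) ^ (thetaV n (g α) i + (psiV n (g α) : ℤ)) := by
          rw [zpow_add₀ hne, zpow_natCast]
        calc (-1 : ℂ) ^ thetaV n α i * z (g α + unitV n (Fin.last n)) *
              ((-1 : ℂ) ^ psiV n α * z (α + unitV n (Fin.last n)))
            + (-1 : ℂ) ^ thetaV n (g α) i * z (α + unitV n (Fin.last n)) *
              ((-1 : ℂ) ^ psiV n (g α) * z (g α + unitV n (Fin.last n)))
            = ((-1 : ℂ) ^ (thetaV n α i + (psiV n α : ℤ))
                + (-1 : ℂ) ^ (thetaV n (g α) i + (psiV n (g α) : ℤ)))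
              * (z (g α + unitV n (Fin.last n)) * z (α + unitV n (Fin.last n))) := by
              rw [← e1, ← e2]; ring
          _ = 0 := by rw [hsign]; ring
      · have hI0 : α i = 0 := by
          have key : ∀ a : ZMod 2, a ≠ 1 → a = 0 := by decide
          exact key _ hI
        have hgI0 : g α i = 0 := by rw [hgi]; exact hI0
        rw [Gmat, if_pos hI0, Gmat, if_pos hgI0]
        simp
    · have hgL : g α (Fin.last n) ≠ 1 := by rw [hglast]; exact hL
      rw [Lcol, if_neg hL, Lcol, if_neg hgL]
      simp
  · -- g has no relevant fixed points
    intro α _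
    have hj : ∃ j : Fin (n+1), j ≠ i ∧ j ≠ Fin.last n := by
      rcases eq_or_ne i ⟨0, by omega⟩ with h0 | h0
      · refine ⟨⟨1, by omega⟩, ?_, ?_⟩
        · rw [h0]; intro h; exact absurd (congrArg Fin.val h) (by simp)
        · intro h; have := congrArg Fin.val h; simp [Fin.val_last] at this; omega
      · refine ⟨⟨0, by omega⟩, Ne.symm h0, ?_⟩
        intro h; have := congrArg Fin.val h; simp [Fin.val_last] at this; omega
    obtain ⟨j, hji, hjl⟩ := hj
    intro hcon
    have := congrFun hcon j
    simp only [hgdef, Pi.add_apply, onesV, unitV, if_neg hji, if_neg hjl] at this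
    have key : ∀ a : ZMod 2, a + 1 + 0 + 0 ≠ a := by decide
    exact key _ this
  · intro α; exact Finset.mem_univ _
  · intro α; exact hginv α
end

section
/- Let n = 2m with m even, and let α, β ∈ F_2^n with α ⊕ β = e ⊕ e_i ⊕ e_n, α(i) = α(n) = 1, for some even i with 1 ≤ i ≤ n-1. Then θ(α,i) + ψ(α) + θ(β,i) + ψ(β) ≡ 1 (mod 2), where θ(α,i) = wt_{i,n}(α) + i/2 and ψ(α) = Σ_{k=1}^{m} α(2k). -/
open Finset

lemma auxRangeSum (N : ℕ) :
    (∑ k ∈ Finset.range N, if (k+1)%2 = 0 then 1 else 0) = N/2 := by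
  induction N with
  | zero => simp
  | succ n ih => rw [Finset.sum_range_succ, ih]; split <;> omega

lemma cardFilt (n : ℕ) :
    (Finset.univ.filter (fun l : Fin (n+1) => (l.1 + 1) % 2 = 0)).card = (n+1)/2 := by
  rw [Finset.card_filter]
  rw [Fin.sum_univ_eq_sum_range (fun k => if (k+1)%2 = 0 then 1 else 0)]
  exact auxRangeSum (n+1)

/-- `n = 2m`, `m` even, `α ⊕ β = e ⊕ e_i ⊕ e_n`, `α(i) = α(n) = 1`,
`i` even, `1 ≤ i ≤ n-1`.  Then `θ(α,i) + ψ(α) + θ(β,i) + ψ(β) ≡ 1 (mod 2)`. -/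
theorem stmt11 (m n : ℕ) (hm : Even m) (hn : n + 1 = 2 * m)
    (i : Fin (n+1)) (hi : i ≠ Fin.last n) (hiev : (i.1 + 1) % 2 = 0)
    (α β : Fin (n+1) → ZMod 2)
    (hαi : α i = 1) (hαn : α (Fin.last n) = 1)
    (h : α + β = onesV n + unitV n i + unitV n (Fin.last n)) :
    thetaV n α i + (psiV n α : ℤ) + thetaV n β i + (psiV n β : ℤ) ≡ 1 [ZMOD 2] := by
  have hβ : ∀ l, β l = α l + 1 + unitV n i l + unitV n (Fin.last n) l := by
    intro l
    have hl := congrFun h l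
    simp only [Pi.add_apply, onesV] at hl
    have h2 : β l = 1 + unitV n i l + unitV n (Fin.last n) l - α l := by
      linear_combination hl
    rw [h2, sub_eq_add_neg, CharTwo.neg_eq]
    ring
  have hcast : ((2:ℕ):ℤ) = 2 := by norm_num
  rw [← hcast, ← ZMod.intCast_eq_intCast_iff]
  simp only [thetaV, if_pos hiev, wtIcc, psiV]
  push_cast
  simp only [ZMod.natCast_val, ZMod.cast_id]
  set S := Finset.Icc i (Fin.last n) with hS
  set T := Finset.univ.filter (fun l : Fin (n+1) => (l.1 + 1) % 2 = 0) with hT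
  have hiS : i ∈ S := by simp [hS, Fin.le_last]
  have hlS : Fin.last n ∈ S := by simp [hS, Fin.le_last]
  have hiT : i ∈ T := by simp [hT, hiev]
  have hlT : Fin.last n ∈ T := by
    simp only [hT, Finset.mem_filter, Finset.mem_univ, true_and, Fin.val_last]
    omega
  have sumU : ∀ (F : Finset (Fin (n+1))) (j : Fin (n+1)), j ∈ F →
      ∑ l ∈ F, unitV n j l = 1 := by
    intro F j hj
    simp only [unitV]
    rw [Finset.sum_ite_eq' F j (fun _ => (1 : ZMod 2))]
    simp [hj]
  have eβ : ∀ (F : Finset (Fin (n+1))), i ∈ F → Fin.last n ∈ F →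
      ∑ l ∈ F, β l = (∑ l ∈ F, α l) + (F.card : ZMod 2) := by
    intro F h1 h2
    simp only [hβ, Finset.sum_add_distrib, sumU F i h1, sumU F (Fin.last n) h2,
      Finset.sum_const, nsmul_eq_mul, mul_one]
    ring_nf
    rw [show (2 : ZMod 2) = 0 from rfl, zero_add]
  rw [eβ S hiS hlS, eβ T hiT hlT]
  have hcS : (S.card : ZMod 2) = 1 := by
    have h1 : i.1 ≤ n := Nat.le_of_lt_succ i.isLt
    rw [hS, Fin.card_Icc, Fin.val_last, ← ZMod.natCast_mod]
    have h2 : (n + 1 - i.1) % 2 = 1 := by omega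
    rw [h2, Nat.cast_one]
  have hcT : (T.card : ZMod 2) = 0 := by
    rw [hT, cardFilt, ← ZMod.natCast_mod]
    have h2 : (n+1)/2 % 2 = 0 := by
      obtain ⟨k, hk⟩ := hm
      omega
    rw [h2, Nat.cast_zero]
  rw [hcS, hcT]
  ring_nf
  rw [show (2 : ZMod 2) = 0 from rfl]
  ring
end

section
/- Let n = 2m with m even, and let α, β ∈ F_2^n with α ⊕ β = e ⊕ e_i ⊕ e_n for some odd i with 1 ≤ i ≤ n-1. Then θ(α,i) + ψ(α) + θ(β,i) + ψ(β) ≡ 1 (mod 2), where θ(α,i) = wt_{i,n}(α) + (i-1)/2 + α(n) and ψ(α) = Σ_{k=1}^{m} α(2k). -/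
open Finset

lemma auxcard (m : ℕ) :
    ((Finset.range (2*m)).filter (fun l => (l+1) % 2 = 0)).card = m := by
  induction m with
  | zero => simp
  | succ k ih =>
    have h2 : 2*(k+1) = (2*k+1)+1 := by ring
    rw [h2, Finset.range_add_one, Finset.filter_insert, if_pos (by omega),
        Finset.card_insert_of_notMem (by simp), Finset.range_add_one,
        Finset.filter_insert, if_neg (by omega), ih]


/-- `n = 2m`, `m` even, `α ⊕ β = e ⊕ e_i ⊕ e_n`, `i` odd,
`1 ≤ i ≤ n-1`.  Then `θ(α,i) + ψ(α) + θ(β,i) + ψ(β) ≡ 1 (mod 2)`. -/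
theorem stmt12 (m n : ℕ) (hm : Even m) (hn : n + 1 = 2 * m)
    (i : Fin (n+1)) (hi : i ≠ Fin.last n) (hiodd : (i.1 + 1) % 2 = 1)
    (α β : Fin (n+1) → ZMod 2)
    (h : α + β = onesV n + unitV n i + unitV n (Fin.last n)) :
    thetaV n α i + (psiV n α : ℤ) + thetaV n β i + (psiV n β : ℤ) ≡ 1 [ZMOD 2] := by
  have hle : i ≤ Fin.last n := Fin.le_last i
  have hcond : ¬ ((i.1 + 1) % 2 = 0) := by omega
  have hβ : ∀ l, β l = onesV n l + unitV n i l + unitV n (Fin.last n) l + α l := by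
    intro l
    have h2 := congrFun h l
    simp only [Pi.add_apply] at h2
    rw [← h2, add_comm (α l) (β l), add_assoc, CharTwo.add_self_eq_zero, add_zero]
  suffices hZ : ((thetaV n α i + (psiV n α : ℤ) + thetaV n β i + (psiV n β : ℤ) : ℤ) : ZMod 2)
      = ((1 : ℤ) : ZMod 2) by
    exact_mod_cast (ZMod.intCast_eq_intCast_iff _ _ 2).mp hZ
  simp only [thetaV, if_neg hcond, wtIcc, psiV]
  push_cast [ZMod.natCast_val, ZMod.cast_id]
  simp only [hβ]
  have hmemi : i ∈ Finset.Icc i (Fin.last n) := Finset.mem_Icc.mpr ⟨le_refl i, hle⟩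
  have hmeml : Fin.last n ∈ Finset.Icc i (Fin.last n) := Finset.mem_Icc.mpr ⟨hle, le_refl _⟩
  have hA1 : ∑ x ∈ Finset.Icc i (Fin.last n), onesV n x = 0 := by
    simp only [onesV, Finset.sum_const, Fin.card_Icc, Fin.val_last, nsmul_eq_mul, mul_one]
    exact (ZMod.natCast_eq_zero_iff _ _).2 (by omega)
  have hA2 : ∑ x ∈ Finset.Icc i (Fin.last n), unitV n i x = 1 := by
    simp [unitV, Finset.sum_ite_eq', hmemi]
  have hA3 : ∑ x ∈ Finset.Icc i (Fin.last n), unitV n (Fin.last n) x = 1 := by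
    simp [unitV, Finset.sum_ite_eq', hmeml]
  have hcard : (Finset.filter (fun l : Fin (n+1) => (l.1 + 1) % 2 = 0) Finset.univ).card = m := by
    rw [Finset.card_filter,
      Fin.sum_univ_eq_sum_range (fun l => if (l + 1) % 2 = 0 then (1:ℕ) else 0) (n+1),
      ← Finset.card_filter, hn, auxcard]
  have hB1 : ∑ x ∈ Finset.filter (fun l : Fin (n+1) => (l.1 + 1) % 2 = 0) Finset.univ,
      onesV n x = 0 := by
    simp only [onesV, Finset.sum_const, hcard, nsmul_eq_mul, mul_one]
    exact (ZMod.natCast_eq_zero_iff _ _).2 hm.two_dvd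
  have hB2 : ∑ x ∈ Finset.filter (fun l : Fin (n+1) => (l.1 + 1) % 2 = 0) Finset.univ,
      unitV n i x = 0 := by
    have : i ∉ Finset.filter (fun l : Fin (n+1) => (l.1 + 1) % 2 = 0) Finset.univ := by
      simp [hiodd]
    simp [unitV, Finset.sum_ite_eq', this]
  have hB3 : ∑ x ∈ Finset.filter (fun l : Fin (n+1) => (l.1 + 1) % 2 = 0) Finset.univ,
      unitV n (Fin.last n) x = 1 := by
    have : Fin.last n ∈ Finset.filter (fun l : Fin (n+1) => (l.1 + 1) % 2 = 0) Finset.univ := by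
      simp only [Finset.mem_filter, Finset.mem_univ, true_and, Fin.val_last]
      omega
    simp [unitV, Finset.sum_ite_eq', this]
  have hv1 : onesV n (Fin.last n) = 1 := rfl
  have hv2 : unitV n i (Fin.last n) = 0 := by
    simp [unitV, (Ne.symm hi)]
  have hv3 : unitV n (Fin.last n) (Fin.last n) = 1 := by simp [unitV]
  simp only [Finset.sum_add_distrib, hA1, hA2, hA3, hB1, hB2, hB3, hv1, hv2, hv3]
  have key : ∀ X Z c y : ZMod 2,
      X + c + y + Z + (0 + 1 + 1 + X + c + (1 + 0 + 1 + y)) + (0 + 0 + 1 + Z) = 1 := by decide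
  exact key _ _ _ _
end

section
/- Let n = 2m with m odd, and suppose φ: F_2^n → {-1, 1} (defined on vectors with last bit 1, equivalently on all of F_2^n by composition with α ↦ α ⊕ e_n) satisfies: φ(α) = -φ(α ⊕ e_i ⊕ e_n) whenever i is odd (1 ≤ i ≤ n-1), and φ(α) = φ(α ⊕ e_i ⊕ e_n) whenever i is even, for all α in the domain where both sides are defined (i.e., α(i) = α(n) = 1 on one side appropriately). Then no such φ exists; more precisely, starting from α₀ = e_m ⊕ e_{m+1} ⊕ ⋯ ⊕ e_{2m-1}, one chain of relations yields φ(α₀) = (-1)^{(m+1)/2} φ(β) and another yields φ(α₀) = (-1)^{(m-1)/2} φ(β) for β = e_1 ⊕ e_3 ⊕ ⋯ ⊕ e_{2m-1}, a contradiction. -/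
/-- The `i`-th standard basis vector of `F_2^n`. -/
def unitF (n : ℕ) (i : Fin n) : Fin n → ZMod 2 := fun j => if j = i then 1 else 0

/-- The all-ones vector of `F_2^n`. -/
def onesF (n : ℕ) : Fin n → ZMod 2 := fun _ => 1

/-- Natural-number model of the chain state after `t` steps, at position `p`. -/
def chainN (m t p : ℕ) : ℕ :=
  (if p % 2 = 0 ∨ p = 2*m-1 then 1 else 0) + t + (if p < t then 1 else 0) +
    (if p = 2*m-1 then t else 0)

/-- The chain state after `t` steps. -/
def chainA (m t : ℕ) : Fin (2*m) → ZMod 2 := fun p => ((chainN m t p.1 : ℕ) : ZMod 2)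

lemma chainA_succ (m t : ℕ) (hm : 1 ≤ m) (h : t < 2*m - 1) :
    chainA m (t+1) = chainA m t + onesF (2*m) + unitF (2*m) ⟨t, by omega⟩ +
      unitF (2*m) ⟨2*m-1, by omega⟩ := by
  funext p
  have hp := p.2
  simp only [chainA, chainN, unitF, onesF, Pi.add_apply, Fin.mk.injEq, Fin.ext_iff]
  push_cast
  split_ifs <;>
    first
      | omega
      | (generalize ((t : ℕ) : ZMod 2) = x; revert x; decide)

lemma chainA_cycle (m : ℕ) (hm : 1 ≤ m) : chainA m (2*m-1) = chainA m 0 := by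
  funext p
  have hp := p.2
  simp only [chainA]
  rw [ZMod.natCast_eq_natCast_iff]
  unfold chainN Nat.ModEq
  split_ifs <;> omega

lemma chainA_idx (m t : ℕ) (hm : 1 ≤ m) (h : t < 2*m - 1) :
    chainA m t ⟨t, by omega⟩ = 1 := by
  simp only [chainA]
  rw [show (1 : ZMod 2) = ((1 : ℕ) : ZMod 2) by norm_num, ZMod.natCast_eq_natCast_iff]
  unfold chainN Nat.ModEq
  split_ifs <;> omega

lemma chainA_last (m t : ℕ) (hm : 1 ≤ m) (h : t < 2*m - 1) :
    chainA m t ⟨2*m-1, by omega⟩ = 1 := by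
  simp only [chainA]
  rw [show (1 : ZMod 2) = ((1 : ℕ) : ZMod 2) by norm_num, ZMod.natCast_eq_natCast_iff]
  unfold chainN Nat.ModEq
  split_ifs <;> omega

/-- for `n = 2m` with `m` odd, there is no sign function
`φ : F_2^n → {±1}` satisfying `φ(α) = -φ(β)` for `i` odd and `φ(α) = φ(β)` for
`i` even, where `α ⊕ β = e ⊕ e_i ⊕ e_n` (for all `α` with `α(i) = α(n) = 1`,
`1 ≤ i ≤ n-1`). -/
theorem stmt16 (m n : ℕ) (hm : Odd m) (hm1 : 1 ≤ m) (hn : n = 2 * m) :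
    ¬ ∃ f : (Fin n → ZMod 2) → ℤ,
      (∀ α, f α = 1 ∨ f α = -1) ∧
      (∀ (α : Fin n → ZMod 2) (i : Fin n), i.1 + 1 ≤ n - 1 →
        α i = 1 → α ⟨n - 1, by omega⟩ = 1 →
        ((Odd (i.1 + 1) →
            f α = - f (α + onesF n + unitF n i + unitF n ⟨n - 1, by omega⟩))
         ∧ (Even (i.1 + 1) →
            f α = f (α + onesF n + unitF n i + unitF n ⟨n - 1, by omega⟩)))) := by
  subst hn
  rintro ⟨f, hpm, hrel⟩
  have key : ∀ t, t ≤ 2*m - 1 →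
      f (chainA m 0) = (-1)^((t+1)/2) * f (chainA m t) := by
    intro t
    induction t with
    | zero => intro _; simp
    | succ t ih =>
      intro ht
      have ht' : t < 2*m - 1 := by omega
      have h1 := ih (by omega)
      have step := hrel (chainA m t) ⟨t, by omega⟩ (by simpa using by omega)
        (chainA_idx m t hm1 ht') (chainA_last m t hm1 ht')
      rw [← chainA_succ m t hm1 ht'] at step
      rcases Nat.even_or_odd t with he | ho
      · have he' := Nat.even_iff.mp he
        have hodd : Odd (t + 1) := Even.add_one he
        have h2 := step.1 hodd
        have : (t+1+1)/2 = (t+1)/2 + 1 := by omega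
        rw [this, h1, h2]; ring
      · have ho' := Nat.odd_iff.mp ho
        have heven : Even (t + 1) := Odd.add_one ho
        have h2 := step.2 heven
        have : (t+1+1)/2 = (t+1)/2 := by omega
        rw [this, h1, h2]
  have hk := key (2*m-1) le_rfl
  rw [chainA_cycle m hm1] at hk
  have hexp : (2*m-1+1)/2 = m := by omega
  rw [hexp] at hk
  have hneg : (-1 : ℤ)^m = -1 := Odd.neg_one_pow hm
  rw [hneg] at hk
  rcases hpm (chainA m 0) with h | h <;> omega
end
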